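/- Let b, c be real numbers with c ≠ 0, and let t₁, t₂ be real numbers with t₁ ≠ ±1, t₂ ≠ ±1, t₁ ≠ ±t₂, and t₁ ≠ 0. Define x(t) = b + 2c·(t²+1)/(t²−1) and D(t) = −(1/c)·(t+1)/(t−1). Suppose P ∈ ℝ satisfies the linear equation ( (x(t₁)−b)/c² + 2·D(t₁) )·P + ( D(t₂) − D(t₁) )/( x(t₂) − x(t₁) ) = 0. Then P · ( −8c·t₁/(t₁²−1)² ) = (t₂+1)/((t₁−1)(t₁+t₂)), where −8c·t₁/(t₁²−1)² is the derivative of t ↦ x(t) at t₁. Moreover the coefficient (x(t₁)−b)/c² + 2·D(t₁) equals −4t₁/(c(t₁²−1)) and hence is nonzero, so P is uniquely determined. -/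

import Mathlib

/-- The spectral-curve change of variable `x(t) = b + 2c·(t²+1)/(t²−1)`. -/
noncomputable def xSpec (b c t : ℝ) : ℝ := b + 2 * c * (t ^ 2 + 1) / (t ^ 2 - 1)

/-- `D(t) = −(1/c)·(t+1)/(t−1)`, the value of `∂F₀₁/∂x` at `x(t)`. -/
noncomputable def DSpec (c t : ℝ) : ℝ := -(1 / c) * ((t + 1) / (t - 1))

/-- The `(g,v) = (0,2)` case of the `x`-variable functional equation determines
the initial condition of the differential recursion: if
`((x(t₁)−b)/c² + 2·D(t₁))·P + (D(t₂)−D(t₁))/(x(t₂)−x(t₁)) = 0`, then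
`P·(−8ct₁/(t₁²−1)²) = (t₂+1)/((t₁−1)(t₁+t₂))`; moreover the coefficient
`(x(t₁)−b)/c² + 2·D(t₁)` equals `−4t₁/(c(t₁²−1))` and is nonzero, so `P` is
uniquely determined. -/
theorem bcMotzkin_F02_initial_condition (b c : ℝ) (hc : c ≠ 0) (t₁ t₂ : ℝ)
    (h₁ : t₁ ≠ 1) (h₁' : t₁ ≠ -1) (h₂ : t₂ ≠ 1) (h₂' : t₂ ≠ -1)
    (h₁₂ : t₁ ≠ t₂) (h₁₂' : t₁ ≠ -t₂) (h₀ : t₁ ≠ 0) (P : ℝ)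
    (hP : ((xSpec b c t₁ - b) / c ^ 2 + 2 * DSpec c t₁) * P
        + (DSpec c t₂ - DSpec c t₁) / (xSpec b c t₂ - xSpec b c t₁) = 0) :
    P * (-8 * c * t₁ / (t₁ ^ 2 - 1) ^ 2) = (t₂ + 1) / ((t₁ - 1) * (t₁ + t₂))
    ∧ (xSpec b c t₁ - b) / c ^ 2 + 2 * DSpec c t₁ = -4 * t₁ / (c * (t₁ ^ 2 - 1))
    ∧ (xSpec b c t₁ - b) / c ^ 2 + 2 * DSpec c t₁ ≠ 0 := by
  have hm1 : t₁ - 1 ≠ 0 := sub_ne_zero.mpr h₁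
  have hp1 : t₁ + 1 ≠ 0 := by intro h; apply h₁'; linarith
  have hm2 : t₂ - 1 ≠ 0 := sub_ne_zero.mpr h₂
  have hp2 : t₂ + 1 ≠ 0 := by intro h; apply h₂'; linarith
  have hd : t₁ - t₂ ≠ 0 := sub_ne_zero.mpr h₁₂
  have hs : t₁ + t₂ ≠ 0 := by intro h; apply h₁₂'; linarith
  have hs1 : t₁ ^ 2 - 1 ≠ 0 := by
    rw [show t₁ ^ 2 - 1 = (t₁ - 1) * (t₁ + 1) by ring]; exact mul_ne_zero hm1 hp1
  have hs2 : t₂ ^ 2 - 1 ≠ 0 := by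
    rw [show t₂ ^ 2 - 1 = (t₂ - 1) * (t₂ + 1) by ring]; exact mul_ne_zero hm2 hp2
  have hA : (xSpec b c t₁ - b) / c ^ 2 + 2 * DSpec c t₁ = -4 * t₁ / (c * (t₁ ^ 2 - 1)) := by
    simp only [xSpec, DSpec]
    field_simp
    ring
  have hAne : (xSpec b c t₁ - b) / c ^ 2 + 2 * DSpec c t₁ ≠ 0 := by
    rw [hA]
    exact div_ne_zero (mul_ne_zero (by norm_num) h₀) (mul_ne_zero hc hs1)
  have hx : xSpec b c t₂ - xSpec b c t₁ = 4 * c * (t₁ ^ 2 - t₂ ^ 2) / ((t₁ ^ 2 - 1) * (t₂ ^ 2 - 1)) := by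
    simp only [xSpec]
    field_simp
    ring
  have hD : DSpec c t₂ - DSpec c t₁ = -2 * (t₁ - t₂) / (c * ((t₁ - 1) * (t₂ - 1))) := by
    simp only [DSpec]
    field_simp
    ring
  have hdiff : t₂ ^ 2 - t₁ ^ 2 ≠ 0 := by
    rw [show t₂ ^ 2 - t₁ ^ 2 = -((t₁ - t₂) * (t₁ + t₂)) by ring]
    exact neg_ne_zero.mpr (mul_ne_zero hd hs)
  have hxne : xSpec b c t₂ - xSpec b c t₁ ≠ 0 := by
    rw [hx]
    exact div_ne_zero (mul_ne_zero (mul_ne_zero (by norm_num) hc) (by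
      intro h; exact hdiff (by linarith))) (mul_ne_zero hs1 hs2)
  have hQ : (DSpec c t₂ - DSpec c t₁) / (xSpec b c t₂ - xSpec b c t₁)
      = -((t₁ + 1) * (t₂ + 1) / (2 * c ^ 2 * (t₁ + t₂))) := by
    rw [div_eq_iff hxne, hD, hx]
    field_simp
    ring
  refine ⟨?_, hA, hAne⟩
  rw [hA, hQ] at hP
  field_simp at hP
  have hP2 : 8 * c * t₁ * (t₁ + t₂) * P = -((t₁ + 1) * (t₂ + 1) * (t₁ ^ 2 - 1)) :=
    mul_left_cancel₀ hc (by linear_combination (-c) * hP)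
  field_simp
  linear_combination (-(t₁ - 1)) * hP2
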